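/- Let μ = inf{i > 0 : −i does not lead to 0}. Then ℙ(μ = ∞) = ℙ(A₀⁻) = ∏_{j≥1}[1 − q_1 q_2 ⋯ q_j], where q_j = 1 − p_j, and for every n ≥ 0, ℙ(n < μ < ∞) = ∏_{k=1}^n (1 − q_1⋯q_k) · (1 − ∏_{m=n+1}^∞ (1 − q_1⋯q_m)). -/

import Mathlib

open MeasureTheory ProbabilityTheory Filter

/-- Configuration: edge indicators. -/
abbrev Cfg := ℤ → ℤ → Bool

/-- There is an edge from `i` to `j`. -/
def Edge (ω : Cfg) (i j : ℤ) : Prop := i < j ∧ ω i j = true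

/-- There is a directed path from `i` to `j`. -/
def Leads (ω : Cfg) : ℤ → ℤ → Prop := Relation.TransGen (Edge ω)

/-- A list of vertices forming a path inside `{a,...,b}`. -/
def IsPathIn (ω : Cfg) (a b : ℤ) (l : List ℤ) : Prop :=
  l ≠ [] ∧ l.Chain' (Edge ω) ∧ ∀ x ∈ l, a ≤ x ∧ x ≤ b

/-- `L ω a b`: maximal number of edges of a path contained in `{a,...,b}`. -/
noncomputable def L (ω : Cfg) (a b : ℤ) : ℕ :=
  sSup {n | ∃ l : List ℤ, IsPathIn ω a b l ∧ l.length = n + 1}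

/-- `T ω i j`: maximal number of edges of a path from `i` to `j` (0 if none). -/
noncomputable def T (ω : Cfg) (i j : ℤ) : ℕ :=
  sSup {n | ∃ l : List ℤ, l.Chain' (Edge ω) ∧ l.head? = some i ∧
    l.getLast? = some j ∧ l.length = n + 1}

/-- The skeleton of the graph. -/
def Skel (ω : Cfg) : Set ℤ :=
  {n | (∀ j, n < j → Leads ω n j) ∧ (∀ j, j < n → Leads ω j n)}

/-- The model hypotheses: independent edges, edge `(i,j)` present w.p. `p (j-i)`. -/
def GraphModel (p : ℕ → ℝ) (μ : Measure Cfg) : Prop :=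
  IsProbabilityMeasure μ ∧
  iIndepFun (m := fun _ : ℤ × ℤ => (inferInstance : MeasurableSpace Bool))
    (fun e ω => ω e.1 e.2) μ ∧
  (∀ i j : ℤ, i < j → μ {ω | ω i j = true} = ENNReal.ofReal (p (j - i).toNat)) ∧
  (∀ i j : ℤ, j ≤ i → μ {ω | ω i j = true} = 0)

open Topology

namespace Stmt8

def Ep (k : ℕ) : Set Cfg :=
  {ω | ∃ m : ℕ, 1 ≤ m ∧ m ≤ k ∧ ω (-(k : ℤ)) (-(k : ℤ) + m) = true}

lemma leads_lt {ω : Cfg} {a b : ℤ} (h : Leads ω a b) : a < b := by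
  induction h with
  | single h' => exact h'.1
  | tail _ h' ih => exact ih.trans h'.1

lemma mem_Ep_of_leads {ω : Cfg} {k : ℕ} (h : Leads ω (-(k : ℤ)) 0) : ω ∈ Ep k := by
  have hdec : ∃ c, Edge ω (-(k : ℤ)) c ∧ (c = 0 ∨ Leads ω c 0) := by
    refine Relation.TransGen.head_induction_on h ?_ ?_
    · intro a h'; exact ⟨0, h', Or.inl rfl⟩
    · intro a c h' hcb _; exact ⟨c, h', Or.inr hcb⟩
  obtain ⟨c, he, hc⟩ := hdec
  rcases hc with rfl | h'
  · have hk : -(k : ℤ) < 0 := he.1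
    refine ⟨k, by omega, le_rfl, ?_⟩
    have h0 : -(k : ℤ) + (k : ℤ) = 0 := by ring
    rw [h0]; exact he.2
  · have hc0 : c < 0 := leads_lt h'
    have hck : -(k : ℤ) < c := he.1
    refine ⟨(c + k).toNat, by omega, by omega, ?_⟩
    have h0 : -(k : ℤ) + ((c + k).toNat : ℤ) = c := by omega
    rw [h0]; exact he.2

lemma leads_of_Ep {ω : Cfg} : ∀ k : ℕ, 1 ≤ k → (∀ j, 1 ≤ j → j ≤ k → ω ∈ Ep j) →
    Leads ω (-(k : ℤ)) 0 := by
  intro k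
  induction k using Nat.strong_induction_on with
  | _ k ih =>
    intro hk h
    obtain ⟨m, hm1, hmk, he⟩ := h k hk le_rfl
    have hedge : Edge ω (-(k : ℤ)) (-(k : ℤ) + (m : ℤ)) := ⟨by omega, he⟩
    rcases eq_or_lt_of_le hmk with hmk' | hmk'
    · have h0 : -(k : ℤ) + (m : ℤ) = 0 := by omega
      exact Relation.TransGen.single (h0 ▸ hedge)
    · have hj : -(k : ℤ) + (m : ℤ) = -((k - m : ℕ) : ℤ) := by omega
      have hlead : Leads ω (-((k - m : ℕ) : ℤ)) 0 :=
        ih (k - m) (by omega) (by omega) (fun j hj1 hj2 => h j hj1 (by omega))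
      exact Relation.TransGen.head (hj ▸ hedge) hlead

lemma setEq1 : {ω : Cfg | ∀ i : ℕ, 0 < i → Leads ω (-(i : ℤ)) 0} = ⋂ j : ℕ, Ep (j + 1) := by
  ext ω
  simp only [Set.mem_setOf_eq, Set.mem_iInter]
  constructor
  · intro h j; exact mem_Ep_of_leads (h (j + 1) (by omega))
  · intro h i hi
    refine leads_of_Ep i hi (fun j hj1 hj2 => ?_)
    have hh := h (j - 1)
    rwa [Nat.sub_add_cancel hj1] at hh

lemma setEq2 (n : ℕ) :
    {ω : Cfg | (∀ k : ℕ, 1 ≤ k → k ≤ n → Leads ω (-(k : ℤ)) 0) ∧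
        ∃ m : ℕ, n < m ∧ ¬ Leads ω (-(m : ℤ)) 0}
      = (⋂ k ∈ Finset.Icc 1 n, Ep k) ∩ (⋂ j : ℕ, Ep (n + 1 + j))ᶜ := by
  ext ω
  simp only [Set.mem_setOf_eq, Set.mem_inter_iff, Set.mem_compl_iff, Set.mem_iInter, not_forall]
  constructor
  · rintro ⟨h1, m, hm, hnl⟩
    have hE : ∀ k, 1 ≤ k → k ≤ n → ω ∈ Ep k := fun k hk1 hk2 => mem_Ep_of_leads (h1 k hk1 hk2)
    refine ⟨fun k hk => hE k (Finset.mem_Icc.1 hk).1 (Finset.mem_Icc.1 hk).2, ?_⟩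
    by_contra hq
    push_neg at hq
    apply hnl
    refine leads_of_Ep m (by omega) (fun j hj1 hjm => ?_)
    by_cases hjn : j ≤ n
    · exact hE j hj1 hjn
    · have hh := hq (j - (n + 1))
      have hidx : n + 1 + (j - (n + 1)) = j := by omega
      rwa [hidx] at hh
  · rintro ⟨hA, j, hj⟩
    have hE : ∀ k, 1 ≤ k → k ≤ n → ω ∈ Ep k := fun k h1 h2 => hA k (Finset.mem_Icc.2 ⟨h1, h2⟩)
    exact ⟨fun k hk1 hk2 => leads_of_Ep k hk1 (fun i hi1 hi2 => hE i hi1 (le_trans hi2 hk2)),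
      n + 1 + j, by omega, fun hl => hj (mem_Ep_of_leads hl)⟩

end Stmt8

namespace Stmt8

/-- `rr p k = 1 - q_1 ⋯ q_k`. -/
def rr (p : ℕ → ℝ) (k : ℕ) : ℝ := 1 - ∏ m ∈ Finset.Icc 1 k, (1 - p m)

section Prob

variable {p : ℕ → ℝ} {μ : Measure Cfg}

lemma measurable_coord (e : ℤ × ℤ) : Measurable (fun ω : Cfg => ω e.1 e.2) :=
  (measurable_pi_apply e.2).comp (measurable_pi_apply e.1)

lemma Ep_eq_iUnion (k : ℕ) :
    Ep k = ⋃ m ∈ Finset.Icc 1 k, {ω : Cfg | ω (-(k : ℤ)) (-(k : ℤ) + (m : ℤ)) = true} := by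
  ext ω
  simp only [Ep, Set.mem_setOf_eq, Set.mem_iUnion, Finset.mem_Icc, exists_prop, and_assoc]

lemma measurableSet_Ep (k : ℕ) : MeasurableSet (Ep k) := by
  rw [Ep_eq_iUnion]
  refine MeasurableSet.iUnion (fun m => MeasurableSet.iUnion (fun _ => ?_))
  exact measurable_coord (-(k : ℤ), -(k : ℤ) + (m : ℤ)) (measurableSet_singleton true)

lemma measurableSet_sup_Ep {k : ℕ} (S : Set (ℤ × ℤ))
    (hS : ∀ m : ℕ, 1 ≤ m → m ≤ k → ((-(k : ℤ), -(k : ℤ) + (m : ℤ)) : ℤ × ℤ) ∈ S) :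
    MeasurableSet[⨆ e ∈ S,
      MeasurableSpace.comap (fun ω : Cfg => ω e.1 e.2) inferInstance] (Ep k) := by
  rw [Ep_eq_iUnion]
  refine MeasurableSet.iUnion (fun m => MeasurableSet.iUnion (fun hm => ?_))
  rw [Finset.mem_Icc] at hm
  have hmem := hS m hm.1 hm.2
  have hle : MeasurableSpace.comap
      (fun ω : Cfg => ω ((-(k : ℤ), -(k : ℤ) + (m : ℤ)) : ℤ × ℤ).1
        ((-(k : ℤ), -(k : ℤ) + (m : ℤ)) : ℤ × ℤ).2) inferInstance
      ≤ ⨆ e ∈ S, MeasurableSpace.comap (fun ω : Cfg => ω e.1 e.2) inferInstance :=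
    le_iSup₂ (f := fun (e : ℤ × ℤ) (_ : e ∈ S) =>
      MeasurableSpace.comap (fun ω : Cfg => ω e.1 e.2) inferInstance)
      ((-(k : ℤ), -(k : ℤ) + (m : ℤ)) : ℤ × ℤ) hmem
  exact hle _ ⟨{true}, measurableSet_singleton true, rfl⟩

lemma indep_group (hmodel : GraphModel p μ) (c : ℤ) {A B : Set Cfg}
    (hA : MeasurableSet[⨆ e ∈ {e : ℤ × ℤ | e.1 ≠ c},
      MeasurableSpace.comap (fun ω : Cfg => ω e.1 e.2) inferInstance] A)
    (hB : MeasurableSet[⨆ e ∈ {e : ℤ × ℤ | e.1 = c},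
      MeasurableSpace.comap (fun ω : Cfg => ω e.1 e.2) inferInstance] B) :
    μ (A ∩ B) = μ A * μ B := by
  haveI := hmodel.1
  have hind := ProbabilityTheory.indep_iSup_of_disjoint
    (fun e : ℤ × ℤ => (measurable_coord e).comap_le) hmodel.2.1.iIndep
    (S := {e : ℤ × ℤ | e.1 ≠ c}) (T := {e : ℤ × ℤ | e.1 = c})
    (by rw [Set.disjoint_left]; intro e he he'; exact he he')
  exact (ProbabilityTheory.Indep_iff _ _ _).1 hind A B hA hB

lemma meas_Ep (hp : ∀ k, 0 ≤ p k ∧ p k < 1) (hmodel : GraphModel p μ) {k : ℕ} (hk : 1 ≤ k) :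
    μ (Ep k) = ENNReal.ofReal (rr p k) := by
  haveI := hmodel.1
  classical
  set S : Finset (ℤ × ℤ) :=
    (Finset.Icc 1 k).image (fun m : ℕ => ((-(k : ℤ), -(k : ℤ) + (m : ℤ)) : ℤ × ℤ)) with hS
  have hset : (⋂ e ∈ S, {ω : Cfg | ω e.1 e.2 = false}) = (Ep k)ᶜ := by
    ext ω
    constructor
    · intro h hmem
      obtain ⟨m, hm1, hmk, htrue⟩ := hmem
      have he : ((-(k : ℤ), -(k : ℤ) + (m : ℤ)) : ℤ × ℤ) ∈ S :=
        Finset.mem_image_of_mem _ (Finset.mem_Icc.mpr ⟨hm1, hmk⟩)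
      have hfalse := Set.mem_iInter₂.1 h _ he
      rw [Set.mem_setOf_eq] at hfalse
      rw [hfalse] at htrue
      exact Bool.false_ne_true htrue
    · intro h
      refine Set.mem_iInter₂.2 (fun e he => ?_)
      obtain ⟨m, hm, rfl⟩ := Finset.mem_image.1 he
      rw [Finset.mem_Icc] at hm
      rw [Set.mem_setOf_eq]
      by_contra hne
      exact h ⟨m, hm.1, hm.2, by simpa using hne⟩
  have hbi := hmodel.2.1.meas_biInter (S := S) (s := fun e => {ω : Cfg | ω e.1 e.2 = false})
    (fun e _ => ⟨{false}, measurableSet_singleton false, rfl⟩)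
  rw [hset] at hbi
  have hinj : ∀ a ∈ Finset.Icc 1 k, ∀ b ∈ Finset.Icc 1 k,
      ((-(k : ℤ), -(k : ℤ) + (a : ℤ)) : ℤ × ℤ) = ((-(k : ℤ), -(k : ℤ) + (b : ℤ)) : ℤ × ℤ) →
      a = b := by
    intro a _ b _ hab
    have := congrArg Prod.snd hab
    simp only at this
    omega
  have hsingle : ∀ m ∈ Finset.Icc 1 k,
      μ {ω : Cfg | ω (-(k : ℤ)) (-(k : ℤ) + (m : ℤ)) = false} = ENNReal.ofReal (1 - p m) := by
    intro m hm
    rw [Finset.mem_Icc] at hm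
    have hlt : -(k : ℤ) < -(k : ℤ) + (m : ℤ) := by omega
    have hcompl : {ω : Cfg | ω (-(k : ℤ)) (-(k : ℤ) + (m : ℤ)) = false}
        = {ω : Cfg | ω (-(k : ℤ)) (-(k : ℤ) + (m : ℤ)) = true}ᶜ := by
      ext ω; simp
    have hmeas : MeasurableSet {ω : Cfg | ω (-(k : ℤ)) (-(k : ℤ) + (m : ℤ)) = true} :=
      measurable_coord (-(k : ℤ), -(k : ℤ) + (m : ℤ)) (measurableSet_singleton true)
    have htn : ((-(k : ℤ) + (m : ℤ)) - (-(k : ℤ))).toNat = m := by omega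
    rw [hcompl, prob_compl_eq_one_sub hmeas, hmodel.2.2.1 _ _ hlt, htn,
      ← ENNReal.ofReal_one, ← ENNReal.ofReal_sub _ (hp m).1]
  have hprod : ∏ e ∈ S, μ {ω : Cfg | ω e.1 e.2 = false}
      = ∏ m ∈ Finset.Icc 1 k, ENNReal.ofReal (1 - p m) := by
    rw [hS, Finset.prod_image hinj]
    exact Finset.prod_congr rfl (fun m hm => hsingle m hm)
  have hq0 : ∀ m ∈ Finset.Icc 1 k, (0 : ℝ) ≤ 1 - p m :=
    fun m _ => by linarith [(hp m).2]
  have hcompl2 : μ ((Ep k)ᶜ) = ENNReal.ofReal (∏ m ∈ Finset.Icc 1 k, (1 - p m)) := by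
    rw [hbi, hprod, ← ENNReal.ofReal_prod_of_nonneg hq0]
  have hfin := prob_compl_eq_one_sub (μ := μ) (measurableSet_Ep k).compl
  rw [compl_compl] at hfin
  rw [hfin, hcompl2, ← ENNReal.ofReal_one,
    ← ENNReal.ofReal_sub _ (Finset.prod_nonneg hq0)]
  rfl

lemma meas_biInter_Ep (hp : ∀ k, 0 ≤ p k ∧ p k < 1) (hmodel : GraphModel p μ) (N : ℕ) :
    μ (⋂ k ∈ Finset.Icc 1 N, Ep k)
      = ENNReal.ofReal (∏ k ∈ Finset.Icc 1 N, rr p k) := by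
  haveI := hmodel.1
  induction N with
  | zero =>
      rw [Finset.Icc_eq_empty (by omega)]
      simp
  | succ N ihN =>
      have hins : Finset.Icc 1 (N + 1) = insert (N + 1) (Finset.Icc 1 N) := by
        ext x; simp only [Finset.mem_Icc, Finset.mem_insert]; omega
      have hnotmem : (N + 1) ∉ Finset.Icc 1 N := by simp
      have hA : MeasurableSet[⨆ e ∈ {e : ℤ × ℤ | e.1 ≠ (-((N : ℤ) + 1) : ℤ)},
          MeasurableSpace.comap (fun ω : Cfg => ω e.1 e.2) inferInstance]
          (⋂ k ∈ Finset.Icc 1 N, Ep k) := by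
        refine MeasurableSet.iInter (fun k => MeasurableSet.iInter (fun hk => ?_))
        rw [Finset.mem_Icc] at hk
        refine measurableSet_sup_Ep _ (fun m hm1 hm2 => ?_)
        simp only [Set.mem_setOf_eq]
        omega
      have hB : MeasurableSet[⨆ e ∈ {e : ℤ × ℤ | e.1 = (-((N : ℤ) + 1) : ℤ)},
          MeasurableSpace.comap (fun ω : Cfg => ω e.1 e.2) inferInstance] (Ep (N + 1)) := by
        refine measurableSet_sup_Ep _ (fun m hm1 hm2 => ?_)
        simp only [Set.mem_setOf_eq]
        push_cast
        ring
      have hind := indep_group hmodel (-((N : ℤ) + 1) : ℤ) hA hB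
      rw [hins, Finset.set_biInter_insert, Set.inter_comm, hind, ihN,
        meas_Ep hp hmodel (by omega : 1 ≤ N + 1),
        Finset.prod_insert hnotmem,
        ← ENNReal.ofReal_mul (Finset.prod_nonneg (fun k _ => ?_)), mul_comm]
      have h1 : ∏ m ∈ Finset.Icc 1 k, (1 - p m) ≤ 1 :=
        Finset.prod_le_one (fun m _ => by linarith [(hp m).2]) (fun m _ => by linarith [(hp m).1])
      simp only [rr]
      linarith

end Prob
end Stmt8

namespace Stmt8

lemma hasProd_and_tendsto {f : ℕ → ℝ} (h0 : ∀ j, 0 ≤ f j) (h1 : ∀ j, f j ≤ 1) :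
    HasProd f (⨅ N : ℕ, ∏ j ∈ Finset.range N, f j) ∧
      Tendsto (fun N : ℕ => ∏ j ∈ Finset.range N, f j) atTop
        (𝓝 (⨅ N : ℕ, ∏ j ∈ Finset.range N, f j)) := by
  have hganti : Antitone (fun S : Finset ℕ => ∏ j ∈ S, f j) := by
    intro S T hST
    calc ∏ j ∈ T, f j = (∏ j ∈ T \ S, f j) * ∏ j ∈ S, f j := (Finset.prod_sdiff hST).symm
    _ ≤ 1 * ∏ j ∈ S, f j := by
        refine mul_le_mul_of_nonneg_right ?_ (Finset.prod_nonneg fun j _ => h0 j)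
        exact Finset.prod_le_one (fun j _ => h0 j) (fun j _ => h1 j)
    _ = ∏ j ∈ S, f j := one_mul _
  have hbdd : BddBelow (Set.range fun S : Finset ℕ => ∏ j ∈ S, f j) :=
    ⟨0, by rintro x ⟨S, rfl⟩; exact Finset.prod_nonneg fun j _ => h0 j⟩
  have htend : Tendsto (fun S : Finset ℕ => ∏ j ∈ S, f j) atTop
      (𝓝 (⨅ S : Finset ℕ, ∏ j ∈ S, f j)) := tendsto_atTop_ciInf hganti hbdd
  have hbdd' : BddBelow (Set.range fun N : ℕ => ∏ j ∈ Finset.range N, f j) :=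
    ⟨0, by rintro x ⟨N, rfl⟩; exact Finset.prod_nonneg fun j _ => h0 j⟩
  have heq : (⨅ S : Finset ℕ, ∏ j ∈ S, f j) = ⨅ N : ℕ, ∏ j ∈ Finset.range N, f j := by
    apply le_antisymm
    · exact le_ciInf (fun N => ciInf_le hbdd _)
    · refine le_ciInf (fun S => ?_)
      obtain ⟨N, hN⟩ := S.exists_nat_subset_range
      exact ciInf_le_of_le hbdd' N (hganti hN)
  refine ⟨heq ▸ htend, ?_⟩
  have hanti2 : Antitone (fun N : ℕ => ∏ j ∈ Finset.range N, f j) :=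
    fun a b hab => hganti (Finset.range_subset_range.2 hab)
  exact tendsto_atTop_ciInf hanti2 hbdd'

lemma prod_range_succ_eq_Icc (r : ℕ → ℝ) (N : ℕ) :
    ∏ j ∈ Finset.range N, r (j + 1) = ∏ k ∈ Finset.Icc 1 N, r k := by
  induction N with
  | zero => rw [Finset.Icc_eq_empty (by omega)]; simp
  | succ N ih =>
      rw [Finset.prod_range_succ, ih, Finset.prod_Icc_succ_top (by omega : 1 ≤ N + 1)]

lemma prod_Icc_split (r : ℕ → ℝ) (n : ℕ) : ∀ N : ℕ,
    ∏ k ∈ Finset.Icc 1 (n + N), r k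
      = (∏ k ∈ Finset.Icc 1 n, r k) * ∏ m ∈ Finset.range N, r (n + 1 + m) := by
  intro N
  induction N with
  | zero => simp
  | succ N ih =>
      have hidx : n + (N + 1) = (n + N) + 1 := rfl
      rw [hidx, Finset.prod_Icc_succ_top (by omega : 1 ≤ n + N + 1), ih,
        Finset.prod_range_succ, show n + 1 + N = n + N + 1 by omega, mul_assoc]

end Stmt8


/-- the law of `μ = inf{i > 0 : −i does not lead to 0}`. -/
theorem stmt_8 (p : ℕ → ℝ) (hp : ∀ k, 0 ≤ p k ∧ p k < 1)
    (μ : Measure Cfg) (hmodel : GraphModel p μ) :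
    (μ {ω | ∀ i : ℕ, 0 < i → Leads ω (-(i : ℤ)) 0}).toReal
      = ∏' j : ℕ, (1 - ∏ m ∈ Finset.Icc 1 (j + 1), (1 - p m)) ∧
    ∀ n : ℕ,
      (μ {ω | (∀ k : ℕ, 1 ≤ k → k ≤ n → Leads ω (-(k : ℤ)) 0) ∧
          ∃ m : ℕ, n < m ∧ ¬ Leads ω (-(m : ℤ)) 0}).toReal
        = (∏ k ∈ Finset.Icc 1 n, (1 - ∏ m ∈ Finset.Icc 1 k, (1 - p m))) *
          (1 - ∏' m : ℕ, (1 - ∏ j ∈ Finset.Icc 1 (n + 1 + m), (1 - p j))) := by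
  classical
  haveI hPM := hmodel.1
  open Stmt8 in
  -- fold the real quantities into `rr`
  simp only [show ∀ k : ℕ, (1 - ∏ m ∈ Finset.Icc 1 k, (1 - p m)) = rr p k from fun k => rfl]
  have hr0 : ∀ k, 0 ≤ rr p k := by
    intro k
    have h1 : ∏ m ∈ Finset.Icc 1 k, (1 - p m) ≤ 1 :=
      Finset.prod_le_one (fun m _ => by linarith [(hp m).2]) (fun m _ => by linarith [(hp m).1])
    simp only [rr]; linarith
  have hr1 : ∀ k, rr p k ≤ 1 := by
    intro k
    have h0 : (0 : ℝ) ≤ ∏ m ∈ Finset.Icc 1 k, (1 - p m) :=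
      Finset.prod_nonneg (fun m _ => by linarith [(hp m).2])
    simp only [rr]; linarith
  -- the decreasing sequence of events
  set F : ℕ → Set Cfg := fun N => ⋂ k ∈ Finset.Icc 1 N, Ep k with hF
  have hmeasF : ∀ N, MeasurableSet (F N) := fun N =>
    MeasurableSet.iInter (fun k => MeasurableSet.iInter (fun _ => measurableSet_Ep k))
  have hμF : ∀ N, μ (F N) = ENNReal.ofReal (∏ k ∈ Finset.Icc 1 N, rr p k) :=
    fun N => meas_biInter_Ep hp hmodel N
  have hFanti : Antitone F := by
    intro a b hab ω hω
    refine Set.mem_iInter₂.2 (fun k hk => Set.mem_iInter₂.1 hω k ?_)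
    rw [Finset.mem_Icc] at hk ⊢
    omega
  obtain ⟨hHasProd1, htend1⟩ :=
    hasProd_and_tendsto (f := fun j => rr p (j + 1)) (fun j => hr0 _) (fun j => hr1 _)
  set Λ : ℝ := ⨅ N : ℕ, ∏ j ∈ Finset.range N, rr p (j + 1) with hΛ
  have hΛ0 : 0 ≤ Λ := le_ciInf fun N => Finset.prod_nonneg fun j _ => hr0 _
  have hPN : ∀ N, ∏ j ∈ Finset.range N, rr p (j + 1) = ∏ k ∈ Finset.Icc 1 N, rr p k :=
    prod_range_succ_eq_Icc (rr p)
  have hEinf : (⋂ N : ℕ, F N) = ⋂ j : ℕ, Ep (j + 1) := by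
    ext ω
    simp only [Set.mem_iInter]
    constructor
    · intro h j
      exact Set.mem_iInter₂.1 (h (j + 1)) (j + 1) (Finset.mem_Icc.mpr ⟨by omega, le_rfl⟩)
    · intro h N
      refine Set.mem_iInter₂.2 (fun k hk => ?_)
      rw [Finset.mem_Icc] at hk
      have hh := h (k - 1)
      rwa [Nat.sub_add_cancel hk.1] at hh
  have htendμ : Tendsto (fun N => μ (F N)) atTop (𝓝 (μ (⋂ j : ℕ, Ep (j + 1)))) := by
    rw [← hEinf]
    exact tendsto_measure_iInter_atTop (fun N => (hmeasF N).nullMeasurableSet) hFanti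
      ⟨0, measure_ne_top μ _⟩
  have htendμ2 : Tendsto (fun N => μ (F N)) atTop (𝓝 (ENNReal.ofReal Λ)) := by
    have hfe : (fun N => μ (F N))
        = fun N => ENNReal.ofReal (∏ j ∈ Finset.range N, rr p (j + 1)) := by
      funext N; rw [hμF N, hPN N]
    rw [hfe]
    exact (ENNReal.continuous_ofReal.tendsto Λ).comp htend1
  have hμEinf : μ (⋂ j : ℕ, Ep (j + 1)) = ENNReal.ofReal Λ :=
    tendsto_nhds_unique htendμ htendμ2
  have htp1 : ∏' j : ℕ, rr p (j + 1) = Λ := hHasProd1.tprod_eq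
  constructor
  · rw [setEq1, hμEinf, ENNReal.toReal_ofReal hΛ0, htp1]
  · intro n
    set A : Set Cfg := ⋂ k ∈ Finset.Icc 1 n, Ep k with hA
    set C : Set Cfg := ⋂ j : ℕ, Ep (n + 1 + j) with hC
    have hmeasC : MeasurableSet C := MeasurableSet.iInter fun j => measurableSet_Ep _
    have hAC : A ∩ C = ⋂ j : ℕ, Ep (j + 1) := by
      ext ω
      constructor
      · rintro ⟨hωA, hωC⟩
        refine Set.mem_iInter.2 (fun j => ?_)
        by_cases hjn : j + 1 ≤ n
        · exact Set.mem_iInter₂.1 hωA (j + 1) (Finset.mem_Icc.mpr ⟨by omega, hjn⟩)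
        · have hh := Set.mem_iInter.1 hωC (j + 1 - (n + 1))
          have hidx : n + 1 + (j + 1 - (n + 1)) = j + 1 := by omega
          rwa [hidx] at hh
      · intro h
        constructor
        · refine Set.mem_iInter₂.2 (fun k hk => ?_)
          rw [Finset.mem_Icc] at hk
          have hh := Set.mem_iInter.1 h (k - 1)
          rwa [Nat.sub_add_cancel hk.1] at hh
        · refine Set.mem_iInter.2 (fun j => ?_)
          have hh := Set.mem_iInter.1 h (n + j)
          have hidx : n + j + 1 = n + 1 + j := by omega
          rwa [hidx] at hh
    have hμA : μ A = ENNReal.ofReal (∏ k ∈ Finset.Icc 1 n, rr p k) :=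
      meas_biInter_Ep hp hmodel n
    obtain ⟨hHasProd2, htend2⟩ :=
      hasProd_and_tendsto (f := fun m => rr p (n + 1 + m)) (fun m => hr0 _) (fun m => hr1 _)
    set Λn : ℝ := ⨅ N : ℕ, ∏ m ∈ Finset.range N, rr p (n + 1 + m) with hΛn
    have hΛn0 : 0 ≤ Λn := le_ciInf fun N => Finset.prod_nonneg fun m _ => hr0 _
    have htp2 : ∏' m : ℕ, rr p (n + 1 + m) = Λn := hHasProd2.tprod_eq
    have hΛeq : Λ = (∏ k ∈ Finset.Icc 1 n, rr p k) * Λn := by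
      have htendP : Tendsto (fun N : ℕ => ∏ k ∈ Finset.Icc 1 N, rr p k) atTop (𝓝 Λ) := by
        have hfe : (fun N : ℕ => ∏ j ∈ Finset.range N, rr p (j + 1))
            = fun N : ℕ => ∏ k ∈ Finset.Icc 1 N, rr p k := funext hPN
        rw [← hfe]; exact htend1
      have hmono : Tendsto (fun N : ℕ => n + N) atTop atTop :=
        tendsto_atTop_mono (fun N => Nat.le_add_left N n) tendsto_id
      have h1 : Tendsto (fun N : ℕ => ∏ k ∈ Finset.Icc 1 (n + N), rr p k) atTop (𝓝 Λ) :=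
        htendP.comp hmono
      have hfe2 : (fun N : ℕ => ∏ k ∈ Finset.Icc 1 (n + N), rr p k)
          = fun N : ℕ => (∏ k ∈ Finset.Icc 1 n, rr p k) * ∏ m ∈ Finset.range N, rr p (n + 1 + m)
        := funext (prod_Icc_split (rr p) n)
      rw [hfe2] at h1
      have h2 : Tendsto
          (fun N : ℕ => (∏ k ∈ Finset.Icc 1 n, rr p k) * ∏ m ∈ Finset.range N, rr p (n + 1 + m))
          atTop (𝓝 ((∏ k ∈ Finset.Icc 1 n, rr p k) * Λn)) := htend2.const_mul _
      exact tendsto_nhds_unique h1 h2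
    have hμAC : μ (A ∩ C) = ENNReal.ofReal Λ := by rw [hAC]; exact hμEinf
    have hadd := measure_inter_add_diff (μ := μ) A hmeasC
    rw [setEq2 n, show A ∩ Cᶜ = A \ C from (Set.diff_eq A C).symm]
    have hPn0 : 0 ≤ ∏ k ∈ Finset.Icc 1 n, rr p k :=
      Finset.prod_nonneg fun k _ => hr0 _
    have htoReal : (μ (A ∩ C)).toReal + (μ (A \ C)).toReal = (μ A).toReal := by
      rw [← ENNReal.toReal_add (measure_ne_top μ _) (measure_ne_top μ _), hadd]
    rw [hμA, ENNReal.toReal_ofReal hPn0, hμAC, ENNReal.toReal_ofReal hΛ0] at htoReal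
    rw [htp2]
    have hgoal : (μ (A \ C)).toReal = ∏ k ∈ Finset.Icc 1 n, rr p k - Λ := by linarith
    rw [hgoal, hΛeq]
    ring
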